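/- arXiv:1912.08102 — 2 statements merged into one kernel-verified Lean document; each statement's English description precedes it below -/
import Mathlib

section
/- At the coexistence equilibrium P₂ = (u₂, u₂ + C) with u₂ = (H₁ + √Δ)/2, the Jacobian of the temporal system has determinant det J = S(H₁ + √Δ)√Δ / (H₁ + 2A + √Δ), which is strictly positive whenever H₁ > 0 and Δ > 0. -/
/-- At P₂ = (u₂, u₂ + C), u₂ = (H₁ + √Δ)/2, the Jacobian of the temporal
    system has determinant S(H₁+√Δ)√Δ/(H₁+2A+√Δ), which is positive when
    H₁ > 0 and Δ > 0. -/
theorem stmt_9 (A C Q S : ℝ) (hA : 0 < A) (hC : 0 < C) (hQ : 0 < Q) (hS : 0 < S)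
    (H₁ H₂ Δ : ℝ) (hH₁ : H₁ = 1 - A - Q) (hH₂ : H₂ = A - C * Q)
    (hΔ : Δ = H₁ ^ 2 + 4 * H₂) (hH₁pos : 0 < H₁) (hΔpos : 0 < Δ) :
    let u₂ := (H₁ + Real.sqrt Δ) / 2
    let J11 := deriv (fun u : ℝ => u * ((1 - u) - Q * (u₂ + C) / (u + A))) u₂
    let J12 := deriv (fun v : ℝ => u₂ * ((1 - u₂) - Q * v / (u₂ + A))) (u₂ + C)
    let J21 := deriv (fun u : ℝ => (u₂ + C) * (S * (1 - (u₂ + C) / (u + C)))) u₂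
    let J22 := deriv (fun v : ℝ => v * (S * (1 - v / (u₂ + C)))) (u₂ + C)
    J11 * J22 - J12 * J21 =
        S * (H₁ + Real.sqrt Δ) * Real.sqrt Δ / (H₁ + 2 * A + Real.sqrt Δ) ∧
    0 < S * (H₁ + Real.sqrt Δ) * Real.sqrt Δ / (H₁ + 2 * A + Real.sqrt Δ) := by
  intro u₂ J11 J12 J21 J22
  have hspos : 0 < Real.sqrt Δ := Real.sqrt_pos.mpr hΔpos
  have hs2 : Real.sqrt Δ ^ 2 = Δ := Real.sq_sqrt hΔpos.le
  have hu₂def : u₂ = (H₁ + Real.sqrt Δ) / 2 := rfl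
  have hupos : 0 < u₂ := by rw [hu₂def]; positivity
  have hAne : u₂ + A ≠ 0 := by positivity
  have hCne : u₂ + C ≠ 0 := by positivity
  have d11 : HasDerivAt (fun u : ℝ => u * ((1 - u) - Q * (u₂ + C) / (u + A)))
      (1 * ((1 - u₂) - Q * (u₂ + C) / (u₂ + A)) +
        u₂ * ((0 - 1) - (0 * (u₂ + A) - Q * (u₂ + C) * 1) / (u₂ + A) ^ 2)) u₂ :=
    (hasDerivAt_id u₂).mul
      (((hasDerivAt_const u₂ 1).sub (hasDerivAt_id u₂)).sub
        ((hasDerivAt_const u₂ (Q * (u₂ + C))).div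
          ((hasDerivAt_id u₂).add_const A) hAne))
  have d12 : HasDerivAt (fun v : ℝ => u₂ * ((1 - u₂) - Q * v / (u₂ + A)))
      (u₂ * (0 - Q * 1 / (u₂ + A))) (u₂ + C) :=
    (((hasDerivAt_const (u₂ + C) (1 - u₂)).sub
        (((hasDerivAt_id (u₂ + C)).const_mul Q).div_const (u₂ + A))).const_mul u₂)
  have d21 : HasDerivAt (fun u : ℝ => (u₂ + C) * (S * (1 - (u₂ + C) / (u + C))))
      ((u₂ + C) * (S * (0 - (0 * (u₂ + C) - (u₂ + C) * 1) / (u₂ + C) ^ 2))) u₂ :=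
    ((((hasDerivAt_const u₂ 1).sub
        ((hasDerivAt_const u₂ (u₂ + C)).div ((hasDerivAt_id u₂).add_const C) hCne)).const_mul
          S).const_mul (u₂ + C))
  have d22 : HasDerivAt (fun v : ℝ => v * (S * (1 - v / (u₂ + C))))
      (1 * (S * (1 - (u₂ + C) / (u₂ + C))) +
        (u₂ + C) * (S * (0 - 1 / (u₂ + C)))) (u₂ + C) :=
    (hasDerivAt_id (u₂ + C)).mul
      (((hasDerivAt_const (u₂ + C) 1).sub
        ((hasDerivAt_id (u₂ + C)).div_const (u₂ + C))).const_mul S)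
  have e11 : J11 = 1 * ((1 - u₂) - Q * (u₂ + C) / (u₂ + A)) +
        u₂ * ((0 - 1) - (0 * (u₂ + A) - Q * (u₂ + C) * 1) / (u₂ + A) ^ 2) := d11.deriv
  have e12 : J12 = u₂ * (0 - Q * 1 / (u₂ + A)) := d12.deriv
  have e21 : J21 = (u₂ + C) * (S * (0 - (0 * (u₂ + C) - (u₂ + C) * 1) / (u₂ + C) ^ 2)) := d21.deriv
  have e22 : J22 = 1 * (S * (1 - (u₂ + C) / (u₂ + C))) +
        (u₂ + C) * (S * (0 - 1 / (u₂ + C))) := d22.deriv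
  rw [e11, e12, e21, e22]
  clear_value J11 J12 J21 J22
  clear e11 e12 e21 e22 d11 d12 d21 d22 J11 J12 J21 J22
  clear_value u₂
  have hu2 : u₂ ^ 2 = H₁ * u₂ + H₂ := by
    rw [hu₂def]; linear_combination (hs2 + hΔ) / 4
  have hDne : H₁ + 2 * A + Real.sqrt Δ ≠ 0 := by positivity
  have E22 : (1 * (S * (1 - (u₂ + C) / (u₂ + C))) + (u₂ + C) * (S * (0 - 1 / (u₂ + C)))) = -S := by
    field_simp; ring
  have E21 : ((u₂ + C) * (S * (0 - (0 * (u₂ + C) - (u₂ + C) * 1) / (u₂ + C) ^ 2))) = S := by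
    field_simp; ring
  rw [E21, E22]
  have key : (1 * ((1 - u₂) - Q * (u₂ + C) / (u₂ + A)) +
        u₂ * ((0 - 1) - (0 * (u₂ + A) - Q * (u₂ + C) * 1) / (u₂ + A) ^ 2)) * (-S) -
      u₂ * (0 - Q * 1 / (u₂ + A)) * S = S * u₂ * (2 * u₂ - H₁) / (u₂ + A) := by
    rw [eq_div_iff hAne]
    field_simp
    linear_combination A * hu2 + (A * u₂ + u₂ * (u₂ + A)) * hH₁ + A * hH₂
  rw [key]
  constructor
  · rw [hu₂def]
    rw [div_eq_div_iff (by positivity) (by positivity)]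
    ring
  · positivity
end

section
/- At the coexistence equilibrium P₂ = (u₂, u₂ + C), the trace of the Jacobian of the temporal system equals (H₁ + √Δ)(Q - √Δ)/(H₁ + 2A + √Δ) - S; hence if S > (H₁ + √Δ)(Q - √Δ)/(H₁ + 2A + √Δ) the trace is negative, and combined with positive determinant both eigenvalues have negative real part, so P₂ is linearly stable. -/
/-- At P₂ the trace of the Jacobian equals
    (H₁+√Δ)(Q-√Δ)/(H₁+2A+√Δ) - S; if S exceeds (H₁+√Δ)(Q-√Δ)/(H₁+2A+√Δ)
    the trace is negative and, the determinant being positive, both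
    eigenvalues have negative real part, so P₂ is linearly stable. -/
theorem stmt_10 (A C Q S : ℝ) (hA : 0 < A) (hC : 0 < C) (hQ : 0 < Q) (hS : 0 < S)
    (H₁ H₂ Δ : ℝ) (hH₁ : H₁ = 1 - A - Q) (hH₂ : H₂ = A - C * Q)
    (hΔ : Δ = H₁ ^ 2 + 4 * H₂)
    (hH₁pos : 0 < H₁) (hH₂neg : H₂ < 0) (hΔpos : 0 < Δ) :
    let u₂ := (H₁ + Real.sqrt Δ) / 2
    let J11 := deriv (fun u : ℝ => u * ((1 - u) - Q * (u₂ + C) / (u + A))) u₂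
    let J22 := deriv (fun v : ℝ => v * (S * (1 - v / (u₂ + C)))) (u₂ + C)
    let trJ := (H₁ + Real.sqrt Δ) * (Q - Real.sqrt Δ) / (H₁ + 2 * A + Real.sqrt Δ) - S
    let detJ := S * (H₁ + Real.sqrt Δ) * Real.sqrt Δ / (H₁ + 2 * A + Real.sqrt Δ)
    J11 + J22 = trJ ∧
    (S > (H₁ + Real.sqrt Δ) * (Q - Real.sqrt Δ) / (H₁ + 2 * A + Real.sqrt Δ) →
      trJ < 0 ∧
      ∀ z : ℂ, z ^ 2 - (trJ : ℂ) * z + (detJ : ℂ) = 0 → z.re < 0) := by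
  intro u₂ J11 J22 trJ detJ
  set s := Real.sqrt Δ with hs
  have hspos : 0 < s := Real.sqrt_pos.mpr hΔpos
  have hs2 : s ^ 2 = Δ := Real.sq_sqrt hΔpos.le
  have hu₂pos : 0 < u₂ := by
    show 0 < (H₁ + s) / 2; linarith
  have huA : (0:ℝ) < u₂ + A := by linarith
  have hK : (0:ℝ) < u₂ + C := by linarith
  have hquad : u₂ ^ 2 = H₁ * u₂ + H₂ := by
    show ((H₁ + s)/2) ^ 2 = H₁ * ((H₁ + s)/2) + H₂
    nlinarith [hs2]
  have h2u : 2 * u₂ = H₁ + s := by show 2 * ((H₁+s)/2) = H₁ + s; ring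
  have heq : (1 - u₂) * (u₂ + A) = Q * (u₂ + C) := by
    nlinarith [hquad]
  -- compute J11
  have hJ11 : J11 = u₂ * (Q * (u₂ + C) / (u₂ + A) ^ 2 - 1) := by
    have h1 : HasDerivAt (fun u : ℝ => u + A) 1 u₂ := (hasDerivAt_id u₂).add_const A
    have h2 : HasDerivAt (fun u : ℝ => Q * (u₂ + C) / (u + A))
        ((0 * (u₂ + A) - Q * (u₂ + C) * 1) / (u₂ + A) ^ 2) u₂ :=
      (hasDerivAt_const u₂ (Q * (u₂ + C))).div h1 huA.ne'
    have h3 : HasDerivAt (fun u : ℝ => (1 - u) - Q * (u₂ + C) / (u + A))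
        ((0 - 1) - (0 * (u₂ + A) - Q * (u₂ + C) * 1) / (u₂ + A) ^ 2) u₂ :=
      (((hasDerivAt_const u₂ (1:ℝ)).sub (hasDerivAt_id u₂))).sub h2
    have h5 := ((hasDerivAt_id u₂).mul h3).deriv
    simp only [id_eq, Pi.mul_def] at h5
    show deriv _ u₂ = _
    rw [h5]
    have hz : (1 - u₂) - Q * (u₂ + C) / (u₂ + A) = 0 := by
      field_simp
      linarith [heq]
    rw [show (1:ℝ) * (1 - u₂ - Q * (u₂ + C) / (u₂ + A)) = (1 - u₂) - Q * (u₂ + C) / (u₂ + A) by ring, hz]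
    ring
  -- compute J22
  have hJ22 : J22 = -S := by
    have h1 : HasDerivAt (fun v : ℝ => S * (1 - v / (u₂ + C))) (S * (0 - 1 / (u₂ + C))) (u₂ + C) :=
      ((hasDerivAt_const (u₂+C) (1:ℝ)).sub ((hasDerivAt_id (u₂+C)).div_const (u₂+C))).const_mul S
    have h5 := ((hasDerivAt_id (u₂ + C)).mul h1).deriv
    simp only [id_eq, Pi.mul_def] at h5
    show deriv _ (u₂ + C) = _
    rw [h5]
    field_simp
    ring
  have hden : H₁ + 2 * A + s = 2 * (u₂ + A) := by linarith
  have hQs : Q - s = 1 - 2 * u₂ - A := by rw [hH₁] at h2u; linarith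
  have htr : J11 + J22 = trJ := by
    rw [hJ11, hJ22]
    show u₂ * (Q * (u₂ + C) / (u₂ + A) ^ 2 - 1) + -S
        = (H₁ + s) * (Q - s) / (H₁ + 2 * A + s) - S
    rw [← heq, hden, hQs, ← h2u]
    field_simp
    ring
  have htrval : trJ = (H₁ + s) * (Q - s) / (H₁ + 2 * A + s) - S := rfl
  have hdetval : detJ = S * (H₁ + s) * s / (H₁ + 2 * A + s) := rfl
  have hdetpos : 0 < detJ := by rw [hdetval]; positivity
  refine ⟨htr, fun hSgt => ?_⟩
  have htrneg : trJ < 0 := by rw [htrval]; linarith [hSgt]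
  refine ⟨htrneg, fun z hz => ?_⟩
  clear_value trJ detJ J11 J22
  clear htrval hdetval htr hJ11 hJ22 hSgt heq hquad h2u hden hQs hs2 hs
  set t := trJ
  set d := detJ
  set x := z.re with hx
  set y := z.im with hy
  have hre : x ^ 2 - y ^ 2 - t * x + d = 0 := by
    have h := congrArg Complex.re hz
    simp only [Complex.add_re, Complex.sub_re, Complex.mul_re, Complex.ofReal_re,
      Complex.ofReal_im, Complex.zero_re, pow_two] at h
    nlinarith [h]
  have him : y * (2 * x - t) = 0 := by
    have h := congrArg Complex.im hz
    simp only [Complex.add_im, Complex.sub_im, Complex.mul_im, Complex.mul_re,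
      Complex.ofReal_re, Complex.ofReal_im, Complex.zero_im, pow_two] at h
    nlinarith [h]
  rcases mul_eq_zero.mp him with hy0 | hx0
  · rw [hy0] at hre
    by_contra hxge
    push_neg at hxge
    nlinarith [hre, htrneg, hdetpos]
  · have : x = t / 2 := by linarith
    linarith [this, htrneg]
end
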